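/- Let R be a commutative ring, σ_i, σ_j, σ_k pairwise commuting automorphisms of R, and t_j a unit of R. Define τ = σ_j(t_j) · (σ_i(σ_j(t_j)))⁻¹. Then the relation t_j · σ_i(σ_k(t_j)) = σ_i(t_j) · σ_k(t_j) holds if and only if σ_k(σ_j⁻¹(τ)) = σ_j⁻¹(τ), i.e., σ_k fixes the element t_j · (σ_i(t_j))⁻¹. -/
import Mathlib

lemma inv_map' {R : Type*} [CommRing R] (f : R ≃+* R) (u : Rˣ) :
    Ring.inverse (f ↑u) = f ↑u⁻¹ := by
  have h : f ↑u = ↑(Units.map f.toRingHom.toMonoidHom u) := rfl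
  rw [h, Ring.inverse_unit]
  exact Units.coe_map_inv f.toRingHom.toMonoidHom u

lemma ratio_eq' {R : Type*} [CommRing R] (a c : R) (b d : Rˣ) :
    a * (↑b⁻¹ : R) = c * ↑d⁻¹ ↔ a * d = c * b := by
  rw [Units.mul_inv_eq_iff_eq_mul, mul_right_comm, eq_comm,
    Units.mul_inv_eq_iff_eq_mul, eq_comm]

theorem stmt1 {R : Type*} [CommRing R] (σi σj σk : R ≃+* R)
    (hij : ∀ r : R, σi (σj r) = σj (σi r))
    (hik : ∀ r : R, σi (σk r) = σk (σi r))
    (hjk : ∀ r : R, σj (σk r) = σk (σj r))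
    (tj : Rˣ) :
    (((tj : R) * σi (σk (tj : R)) = σi (tj : R) * σk (tj : R)) ↔
      σk (σj.symm (σj (tj : R) * Ring.inverse (σi (σj (tj : R))))) =
        σj.symm (σj (tj : R) * Ring.inverse (σi (σj (tj : R))))) ∧
    (((tj : R) * σi (σk (tj : R)) = σi (tj : R) * σk (tj : R)) ↔
      σk ((tj : R) * Ring.inverse (σi (tj : R))) =
        (tj : R) * Ring.inverse (σi (tj : R))) := by
  set t : R := ↑tj with htdef
  have ht' : Ring.inverse (σi (σj t)) = σi (σj ↑tj⁻¹) := inv_map' (σj.trans σi) tj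
  have ht2 : Ring.inverse (σi t) = σi ↑tj⁻¹ := inv_map' σi tj
  have hsimp : σj.symm (σj t * Ring.inverse (σi (σj t))) = t * Ring.inverse (σi t) := by
    rw [ht', ht2, map_mul, RingEquiv.symm_apply_apply, hij, RingEquiv.symm_apply_apply]
  set ui : Rˣ := Units.map σi.toRingHom.toMonoidHom tj with huidef
  set uki : Rˣ := Units.map σk.toRingHom.toMonoidHom ui with hukidef
  have main : (t * σi (σk t) = σi t * σk t) ↔
      σk (t * Ring.inverse (σi t)) = t * Ring.inverse (σi t) := by
    have h1 : σi (↑tj⁻¹ : R) = ↑ui⁻¹ := (Units.coe_map_inv σi.toRingHom.toMonoidHom tj).symm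
    have h2 : σk (↑ui⁻¹ : R) = ↑uki⁻¹ := (Units.coe_map_inv σk.toRingHom.toMonoidHom ui).symm
    rw [ht2, map_mul, h1, h2, ratio_eq']
    have hui : (↑ui : R) = σi t := rfl
    have huki : (↑uki : R) = σk (σi t) := rfl
    rw [hui, huki, ← hik]
    constructor <;> intro h <;> linear_combination -h
  exact ⟨by rw [hsimp]; exact main, main⟩
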